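/- For every θ ∈ (−1,1), χ_2(θ) = (2/√(2π))·[(1+θ²)/(1−θ²) + √(2π)·χ_2^{++}(0) − θ²·𝓘(θ)], where 𝓘(θ) := ∫_0^∞∫_0^∞ (1−e^{−2xy})/(1−θ²e^{−4xy}) · e^{−4xy − (x+y)²/2} dx dy. -/

import Mathlib

open Real MeasureTheory Set

/-- `k θ x y = sgn(y) / (sgn(y)·θ + exp(2(xy)⁺))`. -/
noncomputable def k (θ x y : ℝ) : ℝ :=
  Real.sign y / (Real.sign y * θ + Real.exp (2 * max 0 (x * y)))

/-- Transition density at time 1 of the skew Brownian motion of parameter `θ`. -/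
noncomputable def p (θ x y : ℝ) : ℝ :=
  (Real.sqrt (2 * Real.pi))⁻¹ *
    (if 0 ≤ x ∧ 0 ≤ y then Real.exp (-(x - y) ^ 2 / 2) + θ * Real.exp (-(x + y) ^ 2 / 2)
     else if x ≤ 0 ∧ y ≤ 0 then Real.exp (-(x - y) ^ 2 / 2) - θ * Real.exp (-(x + y) ^ 2 / 2)
     else if 0 ≤ x then (1 - θ) * Real.exp (-(x - y) ^ 2 / 2)
     else (1 + θ) * Real.exp (-(x - y) ^ 2 / 2))

/-- Invariant density of the skew Brownian motion of parameter `θ`. -/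
noncomputable def μinv (θ x : ℝ) : ℝ := if 0 ≤ x then 1 + θ else 1 - θ

/-- `χ_m^{++}(θ)`. -/
noncomputable def chiPP (m : ℕ) (θ : ℝ) : ℝ :=
  ∫ x in Ici (0 : ℝ), ∫ y in Ici (0 : ℝ), (k θ x y) ^ m * p θ x y * μinv θ x

/-- `χ_m^{--}(θ)`. -/
noncomputable def chiMM (m : ℕ) (θ : ℝ) : ℝ :=
  ∫ x in Iic (0 : ℝ), ∫ y in Iic (0 : ℝ), (k θ x y) ^ m * p θ x y * μinv θ x

/-- `χ_m^{+-}(θ)`. -/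
noncomputable def chiPM (m : ℕ) (θ : ℝ) : ℝ :=
  ∫ x in Ici (0 : ℝ), ∫ y in Iic (0 : ℝ), (k θ x y) ^ m * p θ x y * μinv θ x

/-- `χ_m^{-+}(θ)`. -/
noncomputable def chiMP (m : ℕ) (θ : ℝ) : ℝ :=
  ∫ x in Iic (0 : ℝ), ∫ y in Ici (0 : ℝ), (k θ x y) ^ m * p θ x y * μinv θ x

/-- `χ_m(θ)`, the sum over the four quadrants. -/
noncomputable def chi (m : ℕ) (θ : ℝ) : ℝ :=
  chiPP m θ + chiMM m θ + chiPM m θ + chiMP m θ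

/-- `ζ_m(θ)`. -/
noncomputable def zeta (m : ℕ) (θ : ℝ) : ℝ :=
  chiPP m θ + chiPM m θ - chiMM m θ - chiMP m θ

/-- `𝓘(θ)`. -/
noncomputable def scrI (θ : ℝ) : ℝ :=
  ∫ x in Ioi (0 : ℝ), ∫ y in Ioi (0 : ℝ),
    (1 - Real.exp (-2 * x * y)) / (1 - θ ^ 2 * Real.exp (-4 * x * y)) *
      Real.exp (-4 * x * y - (x + y) ^ 2 / 2)


open Filter Function Topology


private lemma gauss_int2 : Integrable (fun y : ℝ => Real.exp (-y ^ 2 / 2)) := by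
  have h := integrable_exp_neg_mul_sq (b := (1:ℝ)/2) (by norm_num)
  have e : (fun y : ℝ => Real.exp (-y ^ 2 / 2)) = fun y : ℝ => Real.exp (-(1/2) * y ^ 2) := by
    funext y; congr 1; ring
  rw [e]; exact h

private lemma gauss_int4 : Integrable (fun y : ℝ => Real.exp (-y ^ 2 / 4)) := by
  have h := integrable_exp_neg_mul_sq (b := (1:ℝ)/4) (by norm_num)
  have e : (fun y : ℝ => Real.exp (-y ^ 2 / 4)) = fun y : ℝ => Real.exp (-(1/4) * y ^ 2) := by
    funext y; congr 1; ring
  rw [e]; exact h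

private lemma gauss_shift_int (x : ℝ) :
    Integrable (fun y : ℝ => Real.exp (-(x + y) ^ 2 / 2)) := by
  have h := gauss_int2.comp_sub_right (-x)
  have e : (fun y : ℝ => Real.exp (-(y - -x) ^ 2 / 2)) = fun y : ℝ => Real.exp (-(x + y) ^ 2 / 2) := by
    funext y; congr 2; ring
  rwa [e] at h

private lemma sq_add_bound {x y : ℝ} (hx : 0 ≤ x) (hy : 0 ≤ y) :
    Real.exp (-(x + y) ^ 2 / 2) ≤ Real.exp (-x ^ 2 / 2) * Real.exp (-y ^ 2 / 2) := by
  rw [← Real.exp_add]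
  apply Real.exp_le_exp.2
  nlinarith [mul_nonneg hx hy]

noncomputable def Sint (g : ℝ → ℝ → ℝ) : ℝ :=
  ∫ x in Ici (0:ℝ), ∫ y in Ici (0:ℝ), g x y * Real.exp (-(x + y) ^ 2 / 2)

section generic

variable {g : ℝ → ℝ → ℝ} {C : ℝ}

private lemma inner_int (hg : Continuous fun p : ℝ × ℝ => g p.1 p.2)
    (hC : ∀ x y, |g x y| ≤ C) (x : ℝ) :
    IntegrableOn (fun y => g x y * Real.exp (-(x + y) ^ 2 / 2)) (Ici 0) := by
  apply Integrable.integrableOn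
  have hcont : Continuous fun y => g x y * Real.exp (-(x + y) ^ 2 / 2) := by
    apply Continuous.mul
    · exact hg.comp (continuous_const.prodMk continuous_id)
    · exact Real.continuous_exp.comp (by continuity)
  refine ((gauss_shift_int x).const_mul C).mono' hcont.aestronglyMeasurable ?_
  filter_upwards with y
  rw [Real.norm_eq_abs, abs_mul, abs_of_pos (Real.exp_pos _)]
  exact mul_le_mul_of_nonneg_right (hC x y) (Real.exp_pos _).le

private lemma inner_bound (hC : ∀ x y, |g x y| ≤ C) {x : ℝ} (hx : 0 ≤ x) :
    ‖∫ y in Ici (0:ℝ), g x y * Real.exp (-(x + y) ^ 2 / 2)‖ ≤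
      (C * ∫ y in Ici (0:ℝ), Real.exp (-y ^ 2 / 2)) * Real.exp (-x ^ 2 / 2) := by
  have hC0 : 0 ≤ C := le_trans (abs_nonneg _) (hC 0 0)
  have hInt : Integrable (fun y : ℝ => C * Real.exp (-x ^ 2 / 2) * Real.exp (-y ^ 2 / 2))
      (volume.restrict (Ici 0)) := (gauss_int2.restrict.const_mul _)
  have hb : ∀ᵐ (y : ℝ) ∂(volume.restrict (Ici 0)),
      ‖g x y * Real.exp (-(x + y) ^ 2 / 2)‖ ≤
        C * Real.exp (-x ^ 2 / 2) * Real.exp (-y ^ 2 / 2) := by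
    filter_upwards [ae_restrict_mem measurableSet_Ici] with y hy
    rw [Real.norm_eq_abs, abs_mul, abs_of_pos (Real.exp_pos _)]
    calc |g x y| * Real.exp (-(x + y) ^ 2 / 2)
        ≤ C * Real.exp (-(x + y) ^ 2 / 2) :=
          mul_le_mul_of_nonneg_right (hC x y) (Real.exp_pos _).le
      _ ≤ C * (Real.exp (-x ^ 2 / 2) * Real.exp (-y ^ 2 / 2)) :=
          mul_le_mul_of_nonneg_left (sq_add_bound hx hy) hC0
      _ = C * Real.exp (-x ^ 2 / 2) * Real.exp (-y ^ 2 / 2) := by ring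
  calc ‖∫ y in Ici (0:ℝ), g x y * Real.exp (-(x + y) ^ 2 / 2)‖
      ≤ ∫ y in Ici (0:ℝ), C * Real.exp (-x ^ 2 / 2) * Real.exp (-y ^ 2 / 2) :=
        norm_integral_le_of_norm_le hInt hb
    _ = (C * ∫ y in Ici (0:ℝ), Real.exp (-y ^ 2 / 2)) * Real.exp (-x ^ 2 / 2) := by
        rw [integral_const_mul]; ring

private lemma outer_int (hg : Continuous fun p : ℝ × ℝ => g p.1 p.2)
    (hC : ∀ x y, |g x y| ≤ C) :
    IntegrableOn (fun x => ∫ y in Ici (0:ℝ), g x y * Real.exp (-(x + y) ^ 2 / 2)) (Ici 0) := by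
  have hF : StronglyMeasurable fun p : ℝ × ℝ => g p.1 p.2 * Real.exp (-(p.1 + p.2) ^ 2 / 2) := by
    exact (hg.mul (Real.continuous_exp.comp (by continuity))).stronglyMeasurable
  have hmeas : StronglyMeasurable
      fun x => ∫ y in Ici (0:ℝ), g x y * Real.exp (-(x + y) ^ 2 / 2) :=
    hF.integral_prod_right'
  refine ((gauss_int2.const_mul (C * ∫ y in Ici (0:ℝ), Real.exp (-y ^ 2 / 2))).restrict).mono'
    hmeas.aestronglyMeasurable ?_
  filter_upwards [ae_restrict_mem measurableSet_Ici] with x hx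
  exact inner_bound hC hx

end generic

private lemma Sint_add {g₁ g₂ : ℝ → ℝ → ℝ} {C₁ C₂ : ℝ}
    (hg₁ : Continuous fun p : ℝ × ℝ => g₁ p.1 p.2) (hC₁ : ∀ x y, |g₁ x y| ≤ C₁)
    (hg₂ : Continuous fun p : ℝ × ℝ => g₂ p.1 p.2) (hC₂ : ∀ x y, |g₂ x y| ≤ C₂) :
    Sint (fun x y => g₁ x y + g₂ x y) = Sint g₁ + Sint g₂ := by
  unfold Sint
  rw [← integral_add (outer_int hg₁ hC₁) (outer_int hg₂ hC₂)]
  apply setIntegral_congr_fun measurableSet_Ici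
  intro x _
  simp only [add_mul]
  exact integral_add (inner_int hg₁ hC₁ x) (inner_int hg₂ hC₂ x)

private lemma Sint_smul (a : ℝ) (g : ℝ → ℝ → ℝ) :
    Sint (fun x y => a * g x y) = a * Sint g := by
  unfold Sint
  simp_rw [mul_assoc, integral_const_mul]

noncomputable def gPP (θ x y : ℝ) : ℝ := (1 + θ) / (θ + Real.exp (2 * max 0 (x * y)))
noncomputable def gMM (θ x y : ℝ) : ℝ := (1 - θ) / (Real.exp (2 * max 0 (x * y)) - θ)
noncomputable def gB (x y : ℝ) : ℝ := Real.exp (-(2 * max 0 (x * y)))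
noncomputable def gC (θ x y : ℝ) : ℝ :=
  (1 - Real.exp (-(2 * max 0 (x * y)))) / (1 - θ ^ 2 * Real.exp (-(2 * max 0 (x * y))) ^ 2) *
    Real.exp (-(2 * max 0 (x * y))) ^ 2

section core

variable {θ : ℝ}

private lemma cE : Continuous fun p : ℝ × ℝ => Real.exp (2 * max 0 (p.1 * p.2)) :=
  Real.continuous_exp.comp
    (continuous_const.mul (continuous_const.max (continuous_fst.mul continuous_snd)))

private lemma cA : Continuous fun p : ℝ × ℝ => Real.exp (-(2 * max 0 (p.1 * p.2))) :=
  Real.continuous_exp.comp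
    ((continuous_const.mul (continuous_const.max (continuous_fst.mul continuous_snd))).neg)

private lemma one_le_E (x y : ℝ) : 1 ≤ Real.exp (2 * max 0 (x * y)) := by
  rw [← Real.exp_zero]
  exact Real.exp_le_exp.2 (by positivity)

private lemma a_le_one (x y : ℝ) : Real.exp (-(2 * max 0 (x * y))) ≤ 1 := by
  rw [← Real.exp_zero]
  apply Real.exp_le_exp.2
  have := le_max_left (0:ℝ) (x * y)
  linarith

private lemma gPP_cont (hθ1 : -1 < θ) : Continuous fun p : ℝ × ℝ => gPP θ p.1 p.2 := by
  apply Continuous.div continuous_const (continuous_const.add cE)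
  intro p
  have := one_le_E p.1 p.2
  intro h; simp only [Pi.add_apply] at h; nlinarith

private lemma gMM_cont (hθ2 : θ < 1) : Continuous fun p : ℝ × ℝ => gMM θ p.1 p.2 := by
  apply Continuous.div continuous_const (cE.sub continuous_const)
  intro p
  have := one_le_E p.1 p.2
  intro h; simp only [Pi.sub_apply] at h; nlinarith

private lemma gB_cont : Continuous fun p : ℝ × ℝ => gB p.1 p.2 := cA

private lemma theta_sq_lt_one (hθ1 : -1 < θ) (hθ2 : θ < 1) : θ ^ 2 < 1 := by nlinarith

private lemma gC_den_pos (hθ1 : -1 < θ) (hθ2 : θ < 1) (x y : ℝ) :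
    0 < 1 - θ ^ 2 * Real.exp (-(2 * max 0 (x * y))) ^ 2 := by
  have h1 := a_le_one x y
  have h2 := Real.exp_pos (-(2 * max 0 (x * y)))
  have h3 := theta_sq_lt_one hθ1 hθ2
  have ha2 : Real.exp (-(2 * max 0 (x * y))) ^ 2 ≤ 1 := by nlinarith
  nlinarith [mul_le_mul_of_nonneg_left ha2 (sq_nonneg θ)]

private lemma gC_cont (hθ1 : -1 < θ) (hθ2 : θ < 1) :
    Continuous fun p : ℝ × ℝ => gC θ p.1 p.2 := by
  apply Continuous.mul
  · apply Continuous.div (continuous_const.sub cA)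
      (continuous_const.sub (continuous_const.mul (cA.pow 2)))
    exact fun p => ne_of_gt (gC_den_pos hθ1 hθ2 p.1 p.2)
  · exact cA.pow 2

private lemma gPP_bd (hθ1 : -1 < θ) : ∀ x y, |gPP θ x y| ≤ 1 := by
  intro x y
  have hE := one_le_E x y
  have hpos : 0 < θ + Real.exp (2 * max 0 (x * y)) := by linarith
  rw [gPP, abs_div, abs_of_pos (by linarith : (0:ℝ) < 1 + θ), abs_of_pos hpos]
  rw [div_le_one hpos]; linarith

private lemma gMM_bd (hθ2 : θ < 1) : ∀ x y, |gMM θ x y| ≤ 1 := by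
  intro x y
  have hE := one_le_E x y
  have hpos : 0 < Real.exp (2 * max 0 (x * y)) - θ := by linarith
  rw [gMM, abs_div, abs_of_pos (by linarith : (0:ℝ) < 1 - θ), abs_of_pos hpos]
  rw [div_le_one hpos]; linarith

private lemma gB_bd : ∀ x y, |gB x y| ≤ 1 := by
  intro x y
  rw [gB, abs_of_pos (Real.exp_pos _)]
  exact a_le_one x y

private lemma gC_bd (hθ1 : -1 < θ) (hθ2 : θ < 1) : ∀ x y, |gC θ x y| ≤ (1 - θ ^ 2)⁻¹ := by
  intro x y
  have ha1 := a_le_one x y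
  have ha0 := Real.exp_pos (-(2 * max 0 (x * y)))
  have hden := gC_den_pos hθ1 hθ2 x y
  have hden2 : 0 < 1 - θ ^ 2 := by nlinarith [theta_sq_lt_one hθ1 hθ2]
  have ha2 : Real.exp (-(2 * max 0 (x * y))) ^ 2 ≤ 1 := by nlinarith
  rw [gC, abs_mul, abs_div]
  rw [abs_of_nonneg (by linarith : (0:ℝ) ≤ 1 - Real.exp (-(2 * max 0 (x * y)))),
    abs_of_pos hden, abs_of_pos (by positivity : (0:ℝ) < Real.exp (-(2 * max 0 (x * y))) ^ 2)]
  have h1 : (1 - Real.exp (-(2 * max 0 (x * y)))) / (1 - θ ^ 2 * Real.exp (-(2 * max 0 (x * y))) ^ 2)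
      ≤ 1 / (1 - θ ^ 2) := by
    apply div_le_div₀ (by positivity) (by linarith) hden2
    nlinarith [mul_le_mul_of_nonneg_left ha2 (sq_nonneg θ)]
  calc (1 - Real.exp (-(2 * max 0 (x * y)))) / (1 - θ ^ 2 * Real.exp (-(2 * max 0 (x * y))) ^ 2) *
        Real.exp (-(2 * max 0 (x * y))) ^ 2
      ≤ 1 / (1 - θ ^ 2) * 1 := by
        apply mul_le_mul h1 ha2 (by positivity) (by positivity)
    _ = (1 - θ ^ 2)⁻¹ := by rw [mul_one, one_div]

private lemma point_id (hθ1 : -1 < θ) (hθ2 : θ < 1) (x y : ℝ) :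
    gPP θ x y + gMM θ x y = 2 * gB x y + (-(2 * θ ^ 2)) * gC θ x y := by
  have hE := one_le_E x y
  have hden := gC_den_pos hθ1 hθ2 x y
  have ha : Real.exp (-(2 * max 0 (x * y))) = (Real.exp (2 * max 0 (x * y)))⁻¹ :=
    Real.exp_neg _
  rw [gPP, gMM, gB, gC]
  rw [ha] at hden ⊢
  set E := Real.exp (2 * max 0 (x * y)) with hEdef
  have hE0 : E ≠ 0 := by positivity
  have h1 : θ + E ≠ 0 := by intro h; nlinarith
  have h2 : E - θ ≠ 0 := by intro h; nlinarith
  have h4 : E ^ 2 - θ ^ 2 ≠ 0 := by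
    have := mul_ne_zero h2 h1
    intro h; apply this; linear_combination h
  have key : 1 - θ ^ 2 * (E⁻¹) ^ 2 = (E ^ 2 - θ ^ 2) / E ^ 2 := by field_simp
  rw [key]
  field_simp
  ring

end core

section quad

variable {θ : ℝ}

private lemma ae_ne_zero : ∀ᵐ (y : ℝ), y ≠ 0 :=
  compl_mem_ae_iff.mpr Real.volume_singleton

private lemma chiPP_eq (hθ1 : -1 < θ) :
    chiPP 2 θ = (Real.sqrt (2 * Real.pi))⁻¹ * Sint (gPP θ) := by
  have step : ∀ x ∈ Ici (0:ℝ),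
      (∫ y in Ici (0:ℝ), k θ x y ^ 2 * p θ x y * μinv θ x) =
      (Real.sqrt (2 * Real.pi))⁻¹ *
        ∫ y in Ici (0:ℝ), gPP θ x y * Real.exp (-(x + y) ^ 2 / 2) := by
    intro x hx
    rw [← integral_const_mul]
    apply setIntegral_congr_ae measurableSet_Ici
    filter_upwards [ae_ne_zero] with y hy0 hy
    have hy' : 0 < y := lt_of_le_of_ne hy (Ne.symm hy0)
    have hx' : (0:ℝ) ≤ x := hx
    have hxy : 0 ≤ x * y := mul_nonneg hx' hy'.le
    have hmax : max 0 (x * y) = x * y := max_eq_right hxy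
    have hE1 : (1:ℝ) ≤ Real.exp (2 * (x * y)) := by
      rw [← Real.exp_zero]; exact Real.exp_le_exp.2 (by positivity)
    have hden : θ + Real.exp (2 * (x * y)) ≠ 0 := by intro h; nlinarith
    have hexp : Real.exp (-(x - y) ^ 2 / 2)
        = Real.exp (2 * (x * y)) * Real.exp (-(x + y) ^ 2 / 2) := by
      rw [← Real.exp_add]; congr 1; ring
    rw [k, p, μinv, gPP, hmax]
    rw [if_pos (⟨hx', hy'.le⟩ : (0:ℝ) ≤ x ∧ (0:ℝ) ≤ y), if_pos hx']
    rw [Real.sign_of_pos hy', hexp]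
    simp only [one_mul]
    have hs : Real.sqrt (2 * Real.pi) ≠ 0 := by positivity
    have halg : ∀ c e E : ℝ, θ + E ≠ 0 →
        (1/(θ+E))^2 * (c*(E*e+θ*e))*(1+θ) = c*((1+θ)/(θ+E)*e) := by
      intro c e E hE
      field_simp
      ring
    exact halg _ _ _ hden
  calc chiPP 2 θ = ∫ x in Ici (0:ℝ), (Real.sqrt (2 * Real.pi))⁻¹ *
        ∫ y in Ici (0:ℝ), gPP θ x y * Real.exp (-(x + y) ^ 2 / 2) :=
        setIntegral_congr_fun measurableSet_Ici (fun x hx => step x hx)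
    _ = _ := integral_const_mul _ _

private lemma chiMM_eq (hθ1 : -1 < θ) (hθ2 : θ < 1) :
    chiMM 2 θ = (Real.sqrt (2 * Real.pi))⁻¹ * Sint (gMM θ) := by
  have h1 := integral_comp_neg_Ioi (0:ℝ)
    (fun x => ∫ y in Iic (0:ℝ), k θ x y ^ 2 * p θ x y * μinv θ x)
  rw [neg_zero] at h1
  have step : ∀ x ∈ Ioi (0:ℝ),
      (∫ y in Iic (0:ℝ), k θ (-x) y ^ 2 * p θ (-x) y * μinv θ (-x)) =
      (Real.sqrt (2 * Real.pi))⁻¹ *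
        ∫ y in Ici (0:ℝ), gMM θ x y * Real.exp (-(x + y) ^ 2 / 2) := by
    intro x hx
    have hx' : 0 < x := hx
    have h2 := integral_comp_neg_Ioi (0:ℝ)
      (fun y => k θ (-x) y ^ 2 * p θ (-x) y * μinv θ (-x))
    rw [neg_zero] at h2
    calc ∫ y in Iic (0:ℝ), k θ (-x) y ^ 2 * p θ (-x) y * μinv θ (-x)
        = ∫ y in Ioi (0:ℝ), k θ (-x) (-y) ^ 2 * p θ (-x) (-y) * μinv θ (-x) := h2.symm
      _ = ∫ y in Ioi (0:ℝ), (Real.sqrt (2 * Real.pi))⁻¹ *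
            (gMM θ x y * Real.exp (-(x + y) ^ 2 / 2)) := ?_
      _ = (Real.sqrt (2 * Real.pi))⁻¹ *
            ∫ y in Ici (0:ℝ), gMM θ x y * Real.exp (-(x + y) ^ 2 / 2) := by
          rw [integral_const_mul, integral_Ici_eq_integral_Ioi]
    apply setIntegral_congr_fun measurableSet_Ioi
    intro y hy
    beta_reduce
    have hy' : 0 < y := hy
    have hxy : 0 ≤ x * y := by positivity
    have hE1 : (1:ℝ) ≤ Real.exp (2 * (x * y)) := by
      rw [← Real.exp_zero]; exact Real.exp_le_exp.2 (by positivity)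
    have hden : Real.exp (2 * (x * y)) - θ ≠ 0 := by intro h; nlinarith
    have hexp : Real.exp (-(x - y) ^ 2 / 2)
        = Real.exp (2 * (x * y)) * Real.exp (-(x + y) ^ 2 / 2) := by
      rw [← Real.exp_add]; congr 1; ring
    rw [k, p, μinv, gMM, neg_mul_neg, max_eq_right hxy]
    rw [if_neg (fun h => absurd h.1 (not_le.mpr (by linarith))),
      if_pos (⟨by linarith, by linarith⟩ : -x ≤ 0 ∧ -y ≤ 0),
      if_neg (not_le.mpr (by linarith : -x < 0))]
    rw [Real.sign_of_neg (by linarith : -y < 0)]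
    rw [show (-x - -y) ^ 2 = (x - y) ^ 2 by ring, show (-x + -y) ^ 2 = (x + y) ^ 2 by ring]
    rw [hexp, show -1 * θ + Real.exp (2 * (x * y)) = Real.exp (2 * (x * y)) - θ by ring]
    have halg : ∀ c e E : ℝ, E - θ ≠ 0 →
        (-1/(E - θ))^2 * (c*(E*e - θ*e)) * (1-θ) = c*((1-θ)/(E-θ)*e) := by
      intro c e E hE
      field_simp
    exact halg _ _ _ hden
  calc chiMM 2 θ
      = ∫ x in Ioi (0:ℝ), ∫ y in Iic (0:ℝ), k θ (-x) y ^ 2 * p θ (-x) y * μinv θ (-x) :=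
        h1.symm
    _ = ∫ x in Ioi (0:ℝ), (Real.sqrt (2 * Real.pi))⁻¹ *
        ∫ y in Ici (0:ℝ), gMM θ x y * Real.exp (-(x + y) ^ 2 / 2) :=
        setIntegral_congr_fun measurableSet_Ioi (fun x hx => step x hx)
    _ = (Real.sqrt (2 * Real.pi))⁻¹ * Sint (gMM θ) := by
        rw [integral_const_mul, Sint, integral_Ici_eq_integral_Ioi]
private lemma chiPM_eq (hθ1 : -1 < θ) (hθ2 : θ < 1) :
    chiPM 2 θ = (Real.sqrt (2 * Real.pi))⁻¹ * ((1 + θ) / (1 - θ)) *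
      Sint (fun _ _ => (1:ℝ)) := by
  have step : ∀ x ∈ Ici (0:ℝ),
      (∫ y in Iic (0:ℝ), k θ x y ^ 2 * p θ x y * μinv θ x) =
      (Real.sqrt (2 * Real.pi))⁻¹ * ((1 + θ) / (1 - θ)) *
        ∫ y in Ici (0:ℝ), (1:ℝ) * Real.exp (-(x + y) ^ 2 / 2) := by
    intro x hx
    have hx' : (0:ℝ) ≤ x := hx
    have h2 := integral_comp_neg_Ioi (0:ℝ) (fun y => k θ x y ^ 2 * p θ x y * μinv θ x)
    rw [neg_zero] at h2
    calc ∫ y in Iic (0:ℝ), k θ x y ^ 2 * p θ x y * μinv θ x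
        = ∫ y in Ioi (0:ℝ), k θ x (-y) ^ 2 * p θ x (-y) * μinv θ x := h2.symm
      _ = ∫ y in Ioi (0:ℝ), (Real.sqrt (2 * Real.pi))⁻¹ * ((1 + θ) / (1 - θ)) *
            (1 * Real.exp (-(x + y) ^ 2 / 2)) := ?_
      _ = (Real.sqrt (2 * Real.pi))⁻¹ * ((1 + θ) / (1 - θ)) *
            ∫ y in Ici (0:ℝ), (1:ℝ) * Real.exp (-(x + y) ^ 2 / 2) := by
          rw [integral_const_mul, integral_Ici_eq_integral_Ioi]
    apply setIntegral_congr_fun measurableSet_Ioi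
    intro y hy
    beta_reduce
    have hy' : 0 < y := hy
    have hxy : x * -y ≤ 0 := by nlinarith
    have hmax : max 0 (x * -y) = 0 := max_eq_left hxy
    have h1θ : (1:ℝ) - θ ≠ 0 := by intro h; nlinarith
    have halg : ∀ c e : ℝ,
        (-1 / (-1 * θ + 1)) ^ 2 * (c * ((1 - θ) * e)) * (1 + θ) =
          c * ((1 + θ) / (1 - θ)) * (1 * e) := by
      intro c e
      rw [show (-1 / (-1 * θ + 1) : ℝ) = -(1 / (1 - θ)) by
        rw [show (-1 * θ + 1 : ℝ) = 1 - θ by ring]; ring]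
      rw [neg_sq]
      field_simp
    have hpval : p θ x (-y) = (Real.sqrt (2 * Real.pi))⁻¹ *
        ((1 - θ) * Real.exp (-(x + y) ^ 2 / 2)) := by
      rcases eq_or_lt_of_le hx' with h | h
      · rw [p, if_neg (fun hh => absurd hh.2 (not_le.mpr (by linarith))),
          if_pos (⟨by linarith, by linarith⟩ : x ≤ 0 ∧ -y ≤ 0)]
        rw [show (x - -y) ^ 2 = (x + y) ^ 2 by ring, show (x + -y) ^ 2 = (x - y) ^ 2 by ring,
          show (x - y) ^ 2 = (x + y) ^ 2 by rw [← h]; ring]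
        ring
      · rw [p, if_neg (fun hh => absurd hh.2 (not_le.mpr (by linarith))),
          if_neg (fun hh => absurd hh.1 (not_le.mpr h)), if_pos hx']
        rw [show (x - -y) ^ 2 = (x + y) ^ 2 by ring]
    rw [k, μinv, hmax, hpval, if_pos hx', Real.sign_of_neg (by linarith : -y < 0),
      mul_zero, Real.exp_zero]
    exact halg _ _
  calc chiPM 2 θ = ∫ x in Ici (0:ℝ), (Real.sqrt (2 * Real.pi))⁻¹ * ((1 + θ) / (1 - θ)) *
        ∫ y in Ici (0:ℝ), (1:ℝ) * Real.exp (-(x + y) ^ 2 / 2) :=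
        setIntegral_congr_fun measurableSet_Ici (fun x hx => step x hx)
    _ = _ := integral_const_mul _ _

private lemma chiMP_eq (hθ1 : -1 < θ) (hθ2 : θ < 1) :
    chiMP 2 θ = (Real.sqrt (2 * Real.pi))⁻¹ * ((1 - θ) / (1 + θ)) *
      Sint (fun _ _ => (1:ℝ)) := by
  have h1 := integral_comp_neg_Ioi (0:ℝ)
    (fun x => ∫ y in Ici (0:ℝ), k θ x y ^ 2 * p θ x y * μinv θ x)
  rw [neg_zero] at h1
  have step : ∀ x ∈ Ioi (0:ℝ),
      (∫ y in Ici (0:ℝ), k θ (-x) y ^ 2 * p θ (-x) y * μinv θ (-x)) =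
      (Real.sqrt (2 * Real.pi))⁻¹ * ((1 - θ) / (1 + θ)) *
        ∫ y in Ici (0:ℝ), (1:ℝ) * Real.exp (-(x + y) ^ 2 / 2) := by
    intro x hx
    have hx' : 0 < x := hx
    rw [← integral_const_mul]
    apply setIntegral_congr_ae measurableSet_Ici
    filter_upwards [ae_ne_zero] with y hy0 hy
    have hy' : 0 < y := lt_of_le_of_ne hy (Ne.symm hy0)
    have hxy : -x * y ≤ 0 := by nlinarith
    have hmax : max 0 (-x * y) = 0 := max_eq_left hxy
    have h2θ : (1:ℝ) + θ ≠ 0 := by intro h; nlinarith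
    rw [k, p, μinv, hmax]
    rw [if_neg (fun hh => absurd hh.1 (not_le.mpr (by linarith))),
      if_neg (fun hh => absurd hh.2 (not_le.mpr (by linarith))),
      if_neg (not_le.mpr (by linarith : -x < (0:ℝ))),
      if_neg (not_le.mpr (by linarith : -x < (0:ℝ)))]
    rw [Real.sign_of_pos hy', mul_zero, Real.exp_zero,
      show (-x - y) ^ 2 = (x + y) ^ 2 by ring]
    have halg : ∀ c e : ℝ,
        (1 / (1 * θ + 1)) ^ 2 * (c * ((1 + θ) * e)) * (1 - θ) =
          c * ((1 - θ) / (1 + θ)) * (1 * e) := by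
      intro c e
      rw [show (1 * θ + 1 : ℝ) = 1 + θ by ring]
      field_simp
    exact halg _ _
  calc chiMP 2 θ
      = ∫ x in Ioi (0:ℝ), ∫ y in Ici (0:ℝ), k θ (-x) y ^ 2 * p θ (-x) y * μinv θ (-x) :=
        h1.symm
    _ = ∫ x in Ioi (0:ℝ), (Real.sqrt (2 * Real.pi))⁻¹ * ((1 - θ) / (1 + θ)) *
        ∫ y in Ici (0:ℝ), (1:ℝ) * Real.exp (-(x + y) ^ 2 / 2) :=
        setIntegral_congr_fun measurableSet_Ioi (fun x hx => step x hx)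
    _ = _ := by
        rw [integral_const_mul, Sint, integral_Ici_eq_integral_Ioi]

end quad

private lemma int_u_gauss : ∫ u in Ioi (0:ℝ), u * Real.exp (-u ^ 2 / 2) = 1 := by
  have hd : ∀ x ∈ Ici (0:ℝ), HasDerivAt (fun u : ℝ => -Real.exp (-u ^ 2 / 2))
      (x * Real.exp (-x ^ 2 / 2)) x := by
    intro x _
    have h1 : HasDerivAt (fun u : ℝ => -u ^ 2 / 2) (-x) x := by
      have h : HasDerivAt (fun u : ℝ => u ^ 2) (2 * x) x := by
        simpa using hasDerivAt_pow 2 x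
      have h2 := (h.neg).div_const 2
      exact h2.congr_deriv (by ring)
    have h3 := (h1.exp).neg
    exact h3.congr_deriv (by ring)
  have hi : IntegrableOn (fun u : ℝ => u * Real.exp (-u ^ 2 / 2)) (Ioi 0) := by
    have h := integrable_mul_exp_neg_mul_sq (b := (1:ℝ)/2) (by norm_num)
    have e : (fun u : ℝ => u * Real.exp (-u ^ 2 / 2))
        = fun u : ℝ => u * Real.exp (-(1/2) * u ^ 2) := by
      funext u; congr 2; ring
    rw [e]; exact h.integrableOn
  have ht : Tendsto (fun u : ℝ => -Real.exp (-u ^ 2 / 2)) atTop (𝓝 0) := by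
    have h0 : Tendsto (fun u : ℝ => Real.exp (-u ^ 2 / 2)) atTop (𝓝 0) := by
      apply Real.tendsto_exp_atBot.comp
      have h := (tendsto_pow_atTop (by norm_num : (2:ℕ) ≠ 0)).atTop_div_const
        (by norm_num : (0:ℝ) < 2)
      exact (tendsto_neg_atTop_atBot.comp h).congr (fun u => by simp; ring)
    have := h0.neg
    rwa [neg_zero] at this
  have hres := integral_Ioi_of_hasDerivAt_of_tendsto' hd hi ht
  rw [hres]
  norm_num

private lemma inner_shift (x : ℝ) :
    ∫ y in Ici (0:ℝ), Real.exp (-(x + y) ^ 2 / 2) =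
      ∫ u in Ici x, Real.exp (-u ^ 2 / 2) := by
  rw [← integral_indicator measurableSet_Ici, ← integral_indicator measurableSet_Ici]
  rw [← integral_add_right_eq_self
    (fun u => (Ici x).indicator (fun u => Real.exp (-u ^ 2 / 2)) u) x]
  apply integral_congr_ae
  filter_upwards with y
  rw [Set.indicator_apply, Set.indicator_apply]
  simp only [mem_Ici, le_add_iff_nonneg_left]
  split_ifs with h
  · congr 1; ring
  · rfl

private lemma J_one : Sint (fun _ _ => (1:ℝ)) = 1 := by
  have hSint : Sint (fun _ _ => (1:ℝ))
      = ∫ x in Ici (0:ℝ), ∫ u in Ici x, Real.exp (-u ^ 2 / 2) := by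
    rw [Sint]
    apply setIntegral_congr_fun measurableSet_Ici
    intro x _
    simp only [one_mul]
    exact inner_shift x
  set G : ℝ × ℝ → ℝ :=
    fun q => Set.indicator {q : ℝ × ℝ | q.1 ≤ q.2} (fun q => Real.exp (-q.2 ^ 2 / 2)) q with hG
  have hGmeas : Measurable G := by
    apply Measurable.indicator
    · exact (Real.continuous_exp.comp (by continuity)).measurable
    · exact measurableSet_le measurable_fst measurable_snd
  have hre : (volume.restrict (Ici (0:ℝ))).prod (volume : Measure ℝ)
      = ((volume : Measure ℝ).prod volume).restrict (Ici 0 ×ˢ univ) := by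
    rw [← Measure.prod_restrict, Measure.restrict_univ]
  have hDint : Integrable (fun q : ℝ × ℝ => Real.exp (-q.1 ^ 2 / 4) * Real.exp (-q.2 ^ 2 / 4))
      ((volume.restrict (Ici 0)).prod volume) := by
    rw [hre]
    exact (gauss_int4.mul_prod gauss_int4).restrict
  have hGint : Integrable G ((volume.restrict (Ici 0)).prod volume) := by
    refine hDint.mono' hGmeas.aestronglyMeasurable ?_
    rw [hre]
    filter_upwards [ae_restrict_mem (measurableSet_Ici.prod MeasurableSet.univ)] with q hq
    have hq1 : (0:ℝ) ≤ q.1 := hq.1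
    simp only [hG]
    by_cases h12 : q.1 ≤ q.2
    · rw [Set.indicator_of_mem (by exact h12)]
      rw [Real.norm_eq_abs, abs_of_pos (Real.exp_pos _), ← Real.exp_add]
      apply Real.exp_le_exp.2
      nlinarith
    · rw [Set.indicator_of_notMem (by exact h12)]
      simp only [norm_zero]
      positivity
  have hswap := integral_integral_swap
    (f := fun x u => G (x, u)) (μ := volume.restrict (Ici 0)) (ν := volume) hGint
  have hleft : (∫ x in Ici (0:ℝ), ∫ u in Ici x, Real.exp (-u ^ 2 / 2))
      = ∫ x in Ici (0:ℝ), ∫ u, G (x, u) := by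
    apply setIntegral_congr_fun measurableSet_Ici
    intro x _
    beta_reduce
    rw [← integral_indicator measurableSet_Ici]
    apply integral_congr_ae
    filter_upwards with u
    simp [hG, Set.indicator_apply, Set.mem_Ici, Set.mem_setOf_eq]
  have hright : ∀ u : ℝ, (∫ x in Ici (0:ℝ), G (x, u)) = (max u 0) * Real.exp (-u ^ 2 / 2) := by
    intro u
    have e1 : ∀ x : ℝ, G (x, u) = Set.indicator (Iic u) (fun _ => Real.exp (-u ^ 2 / 2)) x := by
      intro x
      simp [hG, Set.indicator_apply, Set.mem_setOf_eq, Set.mem_Iic]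
    simp_rw [e1]
    rw [setIntegral_indicator measurableSet_Iic, setIntegral_const, Ici_inter_Iic,
      Real.volume_real_Icc, smul_eq_mul, sub_zero]
  have hfin : (∫ u : ℝ, (max u 0) * Real.exp (-u ^ 2 / 2))
      = ∫ u in Ioi (0:ℝ), u * Real.exp (-u ^ 2 / 2) := by
    rw [← integral_indicator measurableSet_Ioi]
    apply integral_congr_ae
    filter_upwards with u
    rw [Set.indicator_apply]
    by_cases h : u ∈ Ioi (0:ℝ)
    · rw [if_pos h, max_eq_left (le_of_lt h)]
    · rw [if_neg h, max_eq_right (not_lt.mp (by simpa using h)), zero_mul]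
  rw [hSint, hleft, hswap]
  calc (∫ u : ℝ, ∫ x in Ici (0:ℝ), G (x, u)) = ∫ u : ℝ, (max u 0) * Real.exp (-u ^ 2 / 2) := by
        apply integral_congr_ae
        filter_upwards with u
        exact hright u
    _ = 1 := by rw [hfin, int_u_gauss]

private lemma gPP_zero : gPP 0 = gB := by
  funext x y
  rw [gPP, gB, Real.exp_neg]
  norm_num

private lemma scrI_eq {θ : ℝ} : scrI θ = Sint (gC θ) := by
  rw [scrI, Sint]
  rw [integral_Ici_eq_integral_Ioi]
  apply setIntegral_congr_fun measurableSet_Ioi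
  intro x hx
  have hx' : 0 < x := hx
  beta_reduce
  rw [integral_Ici_eq_integral_Ioi]
  apply setIntegral_congr_fun measurableSet_Ioi
  intro y hy
  beta_reduce
  have hy' : 0 < y := hy
  have hxy : 0 ≤ x * y := by positivity
  have hmax : max 0 (x * y) = x * y := max_eq_right hxy
  rw [gC, hmax]
  have e2 : Real.exp (-(2 * (x * y))) = Real.exp (-2 * x * y) := by congr 1; ring
  have e4 : Real.exp (-2 * x * y) ^ 2 = Real.exp (-4 * x * y) := by
    rw [sq, ← Real.exp_add]; congr 1; ring
  have e5 : Real.exp (-4 * x * y - (x + y) ^ 2 / 2)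
      = Real.exp (-4 * x * y) * Real.exp (-(x + y) ^ 2 / 2) := by
    rw [← Real.exp_add]; congr 1; ring
  rw [e2, e4, e5]
  ring

private lemma Sint_split {θ : ℝ} (hθ1 : -1 < θ) (hθ2 : θ < 1) :
    Sint (gPP θ) + Sint (gMM θ) = 2 * Sint gB - 2 * θ ^ 2 * Sint (gC θ) := by
  rw [← Sint_add (gPP_cont hθ1) (gPP_bd hθ1) (gMM_cont hθ2) (gMM_bd hθ2)]
  have e : (fun x y => gPP θ x y + gMM θ x y)
      = fun x y => (2:ℝ) * gB x y + -(2 * θ ^ 2) * gC θ x y := by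
    funext x y; exact point_id hθ1 hθ2 x y
  rw [e]
  have hb1 : ∀ x y : ℝ, |(2:ℝ) * gB x y| ≤ 2 := by
    intro x y
    rw [abs_mul, abs_of_nonneg (by norm_num : (0:ℝ) ≤ 2)]
    calc 2 * |gB x y| ≤ 2 * 1 := by
          exact mul_le_mul_of_nonneg_left (gB_bd x y) (by norm_num)
      _ = 2 := by norm_num
  have hb2 : ∀ x y : ℝ, |-(2 * θ ^ 2) * gC θ x y| ≤ 2 * θ ^ 2 * (1 - θ ^ 2)⁻¹ := by
    intro x y
    rw [abs_mul, abs_neg, abs_of_nonneg (by positivity : (0:ℝ) ≤ 2 * θ ^ 2)]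
    exact mul_le_mul_of_nonneg_left (gC_bd hθ1 hθ2 x y) (by positivity)
  rw [Sint_add (continuous_const.mul gB_cont) hb1
    (continuous_const.mul (gC_cont hθ1 hθ2)) hb2]
  rw [Sint_smul, Sint_smul]
  ring

theorem chi_two_formula (θ : ℝ) (hθ : θ ∈ Set.Ioo (-1 : ℝ) 1) :
    chi 2 θ = (2 / Real.sqrt (2 * Real.pi)) *
      ((1 + θ ^ 2) / (1 - θ ^ 2) + Real.sqrt (2 * Real.pi) * chiPP 2 0 - θ ^ 2 * scrI θ) := by
  obtain ⟨hθ1, hθ2⟩ := hθ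
  have h1θ : (1:ℝ) - θ ≠ 0 := by intro h; nlinarith
  have h2θ : (1:ℝ) + θ ≠ 0 := by intro h; nlinarith
  have h3θ : (1:ℝ) - θ ^ 2 ≠ 0 := by intro h; nlinarith
  have hs : Real.sqrt (2 * Real.pi) ≠ 0 := by positivity
  rw [chi, chiPP_eq hθ1, chiMM_eq hθ1 hθ2, chiPM_eq hθ1 hθ2, chiMP_eq hθ1 hθ2,
    chiPP_eq (by norm_num : (-1:ℝ) < 0), gPP_zero, scrI_eq, J_one]
  have key : (Real.sqrt (2 * Real.pi))⁻¹ * Sint (gPP θ) +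
      (Real.sqrt (2 * Real.pi))⁻¹ * Sint (gMM θ) =
      (Real.sqrt (2 * Real.pi))⁻¹ * (2 * Sint gB - 2 * θ ^ 2 * Sint (gC θ)) := by
    rw [← mul_add, Sint_split hθ1 hθ2]
  rw [key]
  field_simp
  ring
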